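/- BFV scalar decryption correctness: Let q and t be integers with 0 < t ≤ q, let Λ = ⌊q/t⌋ (integer division) and r = q − t·Λ. Then for all integers x and e satisfying 2·|t·e − r·x| < q, the nearest-integer rounding of the rational number t·(Λ·x + e)/q equals x. -/

import Mathlib

/-- BFV scalar decryption correctness: with `Λ = q / t` (integer division) and
`r = q - t * Λ`, if `2 * |t*e - r*x| < q` then the nearest-integer rounding of
`t * (Λ*x + e) / q` equals `x`. -/
theorem bfv_scalar_decrypt_correct (q t : ℤ) (ht : 0 < t) (htq : t ≤ q)
    (Λ r : ℤ) (hΛ : Λ = q / t) (hr : r = q - t * Λ)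
    (x e : ℤ) (hbound : 2 * |t * e - r * x| < q) :
    round ((t * (Λ * x + e) : ℚ) / (q : ℚ)) = x := by
  have hq : (0:ℤ) < q := lt_of_lt_of_le ht htq
  have hq' : (q:ℚ) ≠ 0 := by exact_mod_cast hq.ne'
  have hqQ : (0:ℚ) < (q:ℚ) := by exact_mod_cast hq
  have hid' : t * (Λ * x + e) = (t * e - r * x) + q * x := by linear_combination x * hr
  have hid : (t : ℚ) * (Λ * x + e) = ((t * e - r * x : ℤ) : ℚ) + q * x := by
    exact_mod_cast congrArg (fun z : ℤ => (z : ℚ)) hid'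
  have key : (t * (Λ * x + e) : ℚ) / (q : ℚ)
      = ((t * e - r * x : ℤ) : ℚ) / q + (x : ℤ) := by
    rw [hid, add_div, mul_div_cancel_left₀ _ hq']
  rw [key, round_add_intCast]
  have habs : |((t * e - r * x : ℤ) : ℚ) / q| < 1/2 := by
    rw [abs_div, abs_of_pos hqQ, div_lt_iff₀ hqQ]
    have : (2 : ℚ) * |((t * e - r * x : ℤ) : ℚ)| < q := by
      rw [← Int.cast_abs]
      exact_mod_cast hbound
    linarith
  have h0 : round (((t * e - r * x : ℤ) : ℚ) / q) = 0 := by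
    rw [round_eq_zero_iff]
    rw [abs_lt] at habs
    constructor <;> [linarith [habs.1]; linarith [habs.2]]
  rw [h0, zero_add]
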